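/- Let e, f ∈ E₁₀ satisfy ⟨e, e⟩ = ⟨f, f⟩ = 0 and ⟨e, f⟩ = 1, and let M = {v ∈ E₁₀ : ⟨v, e⟩ = 0 and ⟨v, f⟩ = 0} be the orthogonal complement of the span of e and f. Then M is a free ℤ-module of rank 8, the restriction of ⟨·,·⟩ to M is even (⟨v, v⟩ is divisible by 2 for every v ∈ M), negative definite (⟨v, v⟩ < 0 for every nonzero v ∈ M), and unimodular (the Gram matrix of any ℤ-basis of M has determinant ±1). (Lattice-theoretic content of the proof of Proposition 2.8(2).) -/

import Mathlib

open Matrix BigOperators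

/-- The Gram matrix of the even unimodular hyperbolic lattice `E₁₀ = U ⊕ E₈(−1)`:
indices 0,1 span the hyperbolic plane `U`, and indices 2,…,9 carry the negative
definite `E₈` form (diagonal `−2`, entry `1` for vertices adjacent in the `E₈`
Dynkin diagram). -/
def E10Gram : Matrix (Fin 10) (Fin 10) ℤ :=
  !![0, 1,  0,  0,  0,  0,  0,  0,  0,  0;
     1, 0,  0,  0,  0,  0,  0,  0,  0,  0;
     0, 0, -2,  1,  0,  0,  0,  0,  0,  0;
     0, 0,  1, -2,  1,  0,  0,  0,  0,  0;
     0, 0,  0,  1, -2,  1,  0,  0,  0,  1;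
     0, 0,  0,  0,  1, -2,  1,  0,  0,  0;
     0, 0,  0,  0,  0,  1, -2,  1,  0,  0;
     0, 0,  0,  0,  0,  0,  1, -2,  1,  0;
     0, 0,  0,  0,  0,  0,  0,  1, -2,  0;
     0, 0,  0,  0,  1,  0,  0,  0,  0, -2]

/-- The symmetric bilinear form on `E₁₀ = ℤ¹⁰` with Gram matrix `E10Gram`. -/
def E10Pair (v w : Fin 10 → ℤ) : ℤ := ∑ i, ∑ j, v i * E10Gram i j * w j


lemma sum10 (g : Fin 10 → ℤ) : ∑ i, g i = g 0 + g 1 + g 2 + g 3 + g 4 + g 5 + g 6 + g 7 + g 8 + g 9 := by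
  rw [Fin.sum_univ_castSucc, Fin.sum_univ_castSucc, Fin.sum_univ_eight]
  rfl

lemma pair_expand (v w : Fin 10 → ℤ) : E10Pair v w = (1) * v 0 * w 1 + (1) * v 1 * w 0 + (-2) * v 2 * w 2 + (1) * v 2 * w 3 + (1) * v 3 * w 2 + (-2) * v 3 * w 3 + (1) * v 3 * w 4 + (1) * v 4 * w 3 + (-2) * v 4 * w 4 + (1) * v 4 * w 5 + (1) * v 4 * w 9 + (1) * v 5 * w 4 + (-2) * v 5 * w 5 + (1) * v 5 * w 6 + (1) * v 6 * w 5 + (-2) * v 6 * w 6 + (1) * v 6 * w 7 + (1) * v 7 * w 6 + (-2) * v 7 * w 7 + (1) * v 7 * w 8 + (1) * v 8 * w 7 + (-2) * v 8 * w 8 + (1) * v 9 * w 4 + (-2) * v 9 * w 9 := by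
  simp only [E10Pair, sum10, show E10Gram 0 0 = 0 from rfl, show E10Gram 0 1 = 1 from rfl, show E10Gram 0 2 = 0 from rfl, show E10Gram 0 3 = 0 from rfl, show E10Gram 0 4 = 0 from rfl, show E10Gram 0 5 = 0 from rfl, show E10Gram 0 6 = 0 from rfl, show E10Gram 0 7 = 0 from rfl, show E10Gram 0 8 = 0 from rfl, show E10Gram 0 9 = 0 from rfl, show E10Gram 1 0 = 1 from rfl, show E10Gram 1 1 = 0 from rfl, show E10Gram 1 2 = 0 from rfl, show E10Gram 1 3 = 0 from rfl, show E10Gram 1 4 = 0 from rfl, show E10Gram 1 5 = 0 from rfl, show E10Gram 1 6 = 0 from rfl, show E10Gram 1 7 = 0 from rfl, show E10Gram 1 8 = 0 from rfl, show E10Gram 1 9 = 0 from rfl, show E10Gram 2 0 = 0 from rfl, show E10Gram 2 1 = 0 from rfl, show E10Gram 2 2 = -2 from rfl, show E10Gram 2 3 = 1 from rfl, show E10Gram 2 4 = 0 from rfl, show E10Gram 2 5 = 0 from rfl, show E10Gram 2 6 = 0 from rfl, show E10Gram 2 7 = 0 from rfl, show E10Gram 2 8 = 0 from rfl, show E10Gram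 2 9 = 0 from rfl, show E10Gram 3 0 = 0 from rfl, show E10Gram 3 1 = 0 from rfl, show E10Gram 3 2 = 1 from rfl, show E10Gram 3 3 = -2 from rfl, show E10Gram 3 4 = 1 from rfl, show E10Gram 3 5 = 0 from rfl, show E10Gram 3 6 = 0 from rfl, show E10Gram 3 7 = 0 from rfl, show E10Gram 3 8 = 0 from rfl, show E10Gram 3 9 = 0 from rfl, show E10Gram 4 0 = 0 from rfl, show E10Gram 4 1 = 0 from rfl, show E10Gram 4 2 = 0 from rfl, show E10Gram 4 3 = 1 from rfl, show E10Gram 4 4 = -2 from rfl, show E10Gram 4 5 = 1 from rfl, show E10Gram 4 6 = 0 from rfl, show E10Gram 4 7 = 0 from rfl, show E10Gram 4 8 = 0 from rfl, show E10Gram 4 9 = 1 from rfl, show E10Gram 5 0 = 0 from rfl, show E10Gram 5 1 = 0 from rfl, show E10Gram 5 2 = 0 from rfl, show E10Gram 5 3 = 0 from rfl, show E10Gram 5 4 = 1 from rfl, show E10Gram 5 5 = -2 from rfl, show E10Gram 5 6 = 1 from rfl, show E10Gram 5 7 = 0 from rfl, show E10Gram 5 8 = 0 from rfl, show E10Gram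 5 9 = 0 from rfl, show E10Gram 6 0 = 0 from rfl, show E10Gram 6 1 = 0 from rfl, show E10Gram 6 2 = 0 from rfl, show E10Gram 6 3 = 0 from rfl, show E10Gram 6 4 = 0 from rfl, show E10Gram 6 5 = 1 from rfl, show E10Gram 6 6 = -2 from rfl, show E10Gram 6 7 = 1 from rfl, show E10Gram 6 8 = 0 from rfl, show E10Gram 6 9 = 0 from rfl, show E10Gram 7 0 = 0 from rfl, show E10Gram 7 1 = 0 from rfl, show E10Gram 7 2 = 0 from rfl, show E10Gram 7 3 = 0 from rfl, show E10Gram 7 4 = 0 from rfl, show E10Gram 7 5 = 0 from rfl, show E10Gram 7 6 = 1 from rfl, show E10Gram 7 7 = -2 from rfl, show E10Gram 7 8 = 1 from rfl, show E10Gram 7 9 = 0 from rfl, show E10Gram 8 0 = 0 from rfl, show E10Gram 8 1 = 0 from rfl, show E10Gram 8 2 = 0 from rfl, show E10Gram 8 3 = 0 from rfl, show E10Gram 8 4 = 0 from rfl, show E10Gram 8 5 = 0 from rfl, show E10Gram 8 6 = 0 from rfl, show E10Gram 8 7 = 1 from rfl, show E10Gram 8 8 = -2 from rfl, show E10Gram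 8 9 = 0 from rfl, show E10Gram 9 0 = 0 from rfl, show E10Gram 9 1 = 0 from rfl, show E10Gram 9 2 = 0 from rfl, show E10Gram 9 3 = 0 from rfl, show E10Gram 9 4 = 1 from rfl, show E10Gram 9 5 = 0 from rfl, show E10Gram 9 6 = 0 from rfl, show E10Gram 9 7 = 0 from rfl, show E10Gram 9 8 = 0 from rfl, show E10Gram 9 9 = -2 from rfl]
  ring

lemma pair_symm (v w : Fin 10 → ℤ) : E10Pair v w = E10Pair w v := by
  simp only [pair_expand]; ring

/-- `E10Pair · w` as a linear map. -/
def pairR (w : Fin 10 → ℤ) : (Fin 10 → ℤ) →ₗ[ℤ] ℤ where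
  toFun v := E10Pair v w
  map_add' u v := by simp only [pair_expand, Pi.add_apply]; ring
  map_smul' c v := by
    simp only [pair_expand, Pi.smul_apply, smul_eq_mul, RingHom.id_apply]; ring

lemma pairR_apply (w v : Fin 10 → ℤ) : pairR w v = E10Pair v w := rfl

lemma pair_even (v : Fin 10 → ℤ) : (2 : ℤ) ∣ E10Pair v v :=
  ⟨v 0 * v 1 - v 2^2 + v 2*v 3 - v 3^2 + v 3*v 4 - v 4^2 + v 4*v 5 + v 4*v 9
    - v 5^2 + v 5*v 6 - v 6^2 + v 6*v 7 - v 7^2 + v 7*v 8 - v 8^2 - v 9^2,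
   by simp only [pair_expand]; ring⟩

/-- The auxiliary positive semidefinite form: `N v = (v₀+v₁)² − 2⟨v,v⟩`. -/
def Nform (v : Fin 10 → ℤ) : ℤ := (v 0 + v 1)^2 - 2 * E10Pair v v

lemma Nform_sos (v : Fin 10 → ℤ) : 840 * Nform v =
    840*(v 0 - v 1)^2 + 840*(2*v 2 - v 3)^2 + 280*(3*v 3 - 2*v 4)^2
    + 140*(4*v 4 - 3*v 5 - 3*v 9)^2 + 84*(5*v 5 - 4*v 6 - 3*v 9)^2
    + 56*(6*v 6 - 5*v 7 - 3*v 9)^2 + 40*(7*v 7 - 6*v 8 - 3*v 9)^2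
    + 30*(8*v 8 - 3*v 9)^2 + 210*(v 9)^2 := by
  simp only [Nform, pair_expand]; ring

lemma Nform_nonneg (v : Fin 10 → ℤ) : 0 ≤ Nform v := by
  have hs := Nform_sos v
  have q0 := sq_nonneg (v 0 - v 1); have q1 := sq_nonneg (2*v 2 - v 3)
  have q2 := sq_nonneg (3*v 3 - 2*v 4); have q3 := sq_nonneg (4*v 4 - 3*v 5 - 3*v 9)
  have q4 := sq_nonneg (5*v 5 - 4*v 6 - 3*v 9); have q5 := sq_nonneg (6*v 6 - 5*v 7 - 3*v 9)
  have q6 := sq_nonneg (7*v 7 - 6*v 8 - 3*v 9); have q7 := sq_nonneg (8*v 8 - 3*v 9)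
  have q8 := sq_nonneg (v 9)
  linarith

lemma sq_zero_of_sq_le_zero {x : ℤ} (h : x^2 ≤ 0) : x = 0 := by
  have h2 : x^2 = 0 := le_antisymm h (sq_nonneg x)
  exact pow_eq_zero_iff two_ne_zero |>.mp h2

lemma Nform_eq_zero {v : Fin 10 → ℤ} (h : Nform v = 0) :
    v 0 = v 1 ∧ v 2 = 0 ∧ v 3 = 0 ∧ v 4 = 0 ∧ v 5 = 0 ∧ v 6 = 0 ∧ v 7 = 0 ∧
      v 8 = 0 ∧ v 9 = 0 := by
  have hs := Nform_sos v
  rw [h, mul_zero] at hs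
  have q0 := sq_nonneg (v 0 - v 1); have q1 := sq_nonneg (2*v 2 - v 3)
  have q2 := sq_nonneg (3*v 3 - 2*v 4); have q3 := sq_nonneg (4*v 4 - 3*v 5 - 3*v 9)
  have q4 := sq_nonneg (5*v 5 - 4*v 6 - 3*v 9); have q5 := sq_nonneg (6*v 6 - 5*v 7 - 3*v 9)
  have q6 := sq_nonneg (7*v 7 - 6*v 8 - 3*v 9); have q7 := sq_nonneg (8*v 8 - 3*v 9)
  have q8 := sq_nonneg (v 9)
  have h9 : v 9 = 0 := sq_zero_of_sq_le_zero (by linarith)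
  have h8' : 8*v 8 - 3*v 9 = 0 := sq_zero_of_sq_le_zero (by linarith)
  have h8 : v 8 = 0 := by omega
  have h7' : 7*v 7 - 6*v 8 - 3*v 9 = 0 := sq_zero_of_sq_le_zero (by linarith)
  have h7 : v 7 = 0 := by omega
  have h6' : 6*v 6 - 5*v 7 - 3*v 9 = 0 := sq_zero_of_sq_le_zero (by linarith)
  have h6 : v 6 = 0 := by omega
  have h5' : 5*v 5 - 4*v 6 - 3*v 9 = 0 := sq_zero_of_sq_le_zero (by linarith)
  have h5 : v 5 = 0 := by omega
  have h4' : 4*v 4 - 3*v 5 - 3*v 9 = 0 := sq_zero_of_sq_le_zero (by linarith)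
  have h4 : v 4 = 0 := by omega
  have h3' : 3*v 3 - 2*v 4 = 0 := sq_zero_of_sq_le_zero (by linarith)
  have h3 : v 3 = 0 := by omega
  have h2' : 2*v 2 - v 3 = 0 := sq_zero_of_sq_le_zero (by linarith)
  have h2 : v 2 = 0 := by omega
  have h0' : v 0 - v 1 = 0 := sq_zero_of_sq_le_zero (by linarith)
  exact ⟨by omega, h2, h3, h4, h5, h6, h7, h8, h9⟩

lemma two_mul_pair_self (v : Fin 10 → ℤ) :
    2 * E10Pair v v = (v 0 + v 1)^2 - Nform v := by
  simp only [Nform]; ring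

/-- Negative definiteness on the orthogonal complement of a hyperbolic pair. -/
lemma pair_neg_of_orth (e f v : Fin 10 → ℤ)
    (he : E10Pair e e = 0) (hf : E10Pair f f = 0) (hef : E10Pair e f = 1)
    (hve : E10Pair v e = 0) (hvf : E10Pair v f = 0) (hv : v ≠ 0) :
    E10Pair v v < 0 := by
  by_contra hQ
  push_neg at hQ
  have key : ∀ a s : ℤ,
      E10Pair (fun i => a * (e i + f i) - s * v i) (fun i => a * (e i + f i) - s * v i)
        = 2*a^2 + s^2 * E10Pair v v := by
    intro a s
    simp only [pair_expand] at he hf hef hve hvf ⊢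
    linear_combination a^2*he + a^2*hf + 2*a^2*hef - 2*a*s*hve - 2*a*s*hvf
  have hQtt : E10Pair (fun i => e i + f i) (fun i => e i + f i) = 2 := by
    simp only [pair_expand] at he hf hef ⊢
    linear_combination he + hf + 2*hef
  have hNt := Nform_nonneg (fun i => e i + f i)
  have h2t : 2 * E10Pair (fun i => e i + f i) (fun i => e i + f i) =
      ((e 0 + f 0) + (e 1 + f 1))^2 - Nform (fun i => e i + f i) :=
    two_mul_pair_self _
  rw [hQtt] at h2t
  have hspos : 0 < ((e 0 + f 0) + (e 1 + f 1))^2 := by linarith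
  have hQxx := key (v 0 + v 1) ((e 0 + f 0) + (e 1 + f 1))
  have hNx := Nform_nonneg
    (fun i => (v 0 + v 1) * (e i + f i) - ((e 0 + f 0) + (e 1 + f 1)) * v i)
  have h2x : 2 * E10Pair
      (fun i => (v 0 + v 1) * (e i + f i) - ((e 0 + f 0) + (e 1 + f 1)) * v i)
      (fun i => (v 0 + v 1) * (e i + f i) - ((e 0 + f 0) + (e 1 + f 1)) * v i) =
      (((v 0 + v 1) * (e 0 + f 0) - ((e 0 + f 0) + (e 1 + f 1)) * v 0) +
        ((v 0 + v 1) * (e 1 + f 1) - ((e 0 + f 0) + (e 1 + f 1)) * v 1))^2 -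
      Nform (fun i => (v 0 + v 1) * (e i + f i) - ((e 0 + f 0) + (e 1 + f 1)) * v i) :=
    two_mul_pair_self _
  rw [hQxx] at h2x
  have hsq : (((v 0 + v 1) * (e 0 + f 0) - ((e 0 + f 0) + (e 1 + f 1)) * v 0) +
      ((v 0 + v 1) * (e 1 + f 1) - ((e 0 + f 0) + (e 1 + f 1)) * v 1))^2 = (0:ℤ) := by
    ring
  rw [hsq] at h2x
  have hX : ((e 0 + f 0) + (e 1 + f 1))^2 * E10Pair v v ≤ 0 := by
    have := sq_nonneg (v 0 + v 1)
    linarith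
  have hXnn : 0 ≤ ((e 0 + f 0) + (e 1 + f 1))^2 * E10Pair v v :=
    mul_nonneg hspos.le hQ
  have hQv0 : E10Pair v v = 0 := by
    rcases mul_eq_zero.mp (le_antisymm hX hXnn) with h | h
    · exact absurd h (by linarith)
    · exact h
  have hXzero : ((e 0 + f 0) + (e 1 + f 1))^2 * E10Pair v v = 0 := by
    rw [hQv0]; ring
  have ha0 : v 0 + v 1 = 0 := by
    apply sq_zero_of_sq_le_zero
    linarith
  have h2v := two_mul_pair_self v
  rw [hQv0, ha0] at h2v
  have hNv : Nform v = 0 := by linarith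
  obtain ⟨e01, e2, e3, e4, e5, e6, e7, e8, e9⟩ := Nform_eq_zero hNv
  apply hv
  funext i
  have h0 : v 0 = 0 := by omega
  have h1 : v 1 = 0 := by omega
  fin_cases i <;> simp only [Pi.zero_apply] <;> assumption

def E10GramInv : Matrix (Fin 10) (Fin 10) ℤ :=
  !![0, 1, 0, 0, 0, 0, 0, 0, 0, 0;
     1, 0, 0, 0, 0, 0, 0, 0, 0, 0;
     0, 0, -4, -7, -10, -8, -6, -4, -2, -5;
     0, 0, -7, -14, -20, -16, -12, -8, -4, -10;
     0, 0, -10, -20, -30, -24, -18, -12, -6, -15;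
     0, 0, -8, -16, -24, -20, -15, -10, -5, -12;
     0, 0, -6, -12, -18, -15, -12, -8, -4, -9;
     0, 0, -4, -8, -12, -10, -8, -6, -3, -6;
     0, 0, -2, -4, -6, -5, -4, -3, -2, -3;
     0, 0, -5, -10, -15, -12, -9, -6, -3, -8]

lemma det_mul_three {ι : Type*} [Fintype ι] [DecidableEq ι] (A B C : Matrix ι ι ℤ) :
    (A * B * C).det = A.det * B.det * C.det := by
  rw [Matrix.det_mul, Matrix.det_mul]

lemma det_blocks_helper {m n : Type*} [Fintype m] [Fintype n] [DecidableEq m] [DecidableEq n]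
    (A : Matrix m m ℤ) (D : Matrix n n ℤ) :
    (Matrix.fromBlocks A 0 0 D).det = A.det * D.det := by
  rw [Matrix.det_fromBlocks_zero₂₁]

lemma det_pm {ι : Type*} [Fintype ι] [DecidableEq ι] (A B : Matrix ι ι ℤ)
    (h : A * B = 1) : A.det = 1 ∨ A.det = -1 := by
  have h2 := congrArg Matrix.det h
  rw [Matrix.det_mul, Matrix.det_one] at h2
  exact Int.isUnit_iff.mp (IsUnit.of_mul_eq_one _ h2)

/-- Any basis of `M` extends, together with `e, f`, to a basis of `ℤ¹⁰`. -/
lemma exists_basis_ext (e f : Fin 10 → ℤ)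
    (he : E10Pair e e = 0) (hf : E10Pair f f = 0) (hef : E10Pair e f = 1)
    (M : Submodule ℤ (Fin 10 → ℤ))
    (hM : ∀ v : Fin 10 → ℤ, v ∈ M ↔ E10Pair v e = 0 ∧ E10Pair v f = 0)
    {ι : Type*} [Fintype ι] [DecidableEq ι] (bb : Module.Basis ι ℤ M) :
    ∃ cb : Module.Basis (Fin 2 ⊕ ι) ℤ (Fin 10 → ℤ),
      ∀ k, cb k = Sum.elim ![e, f] (fun i => (bb i : Fin 10 → ℤ)) k := by
  set g : Fin 2 ⊕ ι → (Fin 10 → ℤ) := Sum.elim ![e, f] (fun i => (bb i : Fin 10 → ℤ)) with hg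
  have hbe : ∀ i : ι, E10Pair (bb i : Fin 10 → ℤ) e = 0 := fun i => ((hM _).1 (bb i).2).1
  have hbf : ∀ i : ι, E10Pair (bb i : Fin 10 → ℤ) f = 0 := fun i => ((hM _).1 (bb i).2).2
  have hfe : E10Pair f e = 1 := by rw [pair_symm]; exact hef
  have hli : LinearIndependent ℤ g := by
    rw [Fintype.linearIndependent_iff]
    intro c hc
    rw [Fintype.sum_sum_type, Fin.sum_univ_two] at hc
    have hg0 : g (Sum.inl 0) = e := rfl
    have hg1 : g (Sum.inl 1) = f := rfl
    have hgr : ∀ i, g (Sum.inr i) = (bb i : Fin 10 → ℤ) := fun i => rfl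
    rw [hg0, hg1] at hc
    simp only [hgr] at hc
    have h0 : c (Sum.inl 0) = 0 := by
      have h := congrArg (pairR f) hc
      simp only [map_add, map_sum, LinearMap.map_smul, map_zero, smul_eq_mul] at h
      simp only [pairR_apply, hef, hf, hbf, mul_zero, mul_one,
        Finset.sum_const_zero] at h
      linarith
    have h1 : c (Sum.inl 1) = 0 := by
      have h := congrArg (pairR e) hc
      simp only [map_add, map_sum, LinearMap.map_smul, map_zero, smul_eq_mul] at h
      simp only [pairR_apply, he, hfe, hbe, mul_zero, mul_one,
        Finset.sum_const_zero] at h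
      linarith
    rw [h0, h1, zero_smul, zero_smul, zero_add, zero_add] at hc
    have hcM : (∑ i, c (Sum.inr i) • bb i : M) = 0 := by
      apply Subtype.ext
      push_cast
      exact hc
    have hz := Fintype.linearIndependent_iff.mp bb.linearIndependent _ hcM
    rintro (a | i)
    · fin_cases a
      · exact h0
      · exact h1
    · exact hz i
  have hsp : ⊤ ≤ Submodule.span ℤ (Set.range g) := by
    intro v _
    have hm : v - E10Pair v f • e - E10Pair v e • f ∈ M := by
      rw [hM]
      constructor
      · have h : pairR e (v - E10Pair v f • e - E10Pair v e • f) =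
            E10Pair v e - E10Pair v f * E10Pair e e - E10Pair v e * E10Pair f e := by
          simp only [map_sub, LinearMap.map_smul, smul_eq_mul, pairR_apply]
        rw [pairR_apply] at h
        rw [h, he, hfe]; ring
      · have h : pairR f (v - E10Pair v f • e - E10Pair v e • f) =
            E10Pair v f - E10Pair v f * E10Pair e f - E10Pair v e * E10Pair f f := by
          simp only [map_sub, LinearMap.map_smul, smul_eq_mul, pairR_apply]
        rw [pairR_apply] at h
        rw [h, hf, hef]; ring
    have hrepr := bb.sum_repr ⟨_, hm⟩
    have hreprc : ∑ i, bb.repr ⟨_, hm⟩ i • (bb i : Fin 10 → ℤ) =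
        v - E10Pair v f • e - E10Pair v e • f := by
      have h := congrArg (Submodule.subtype M) hrepr
      rw [map_sum] at h
      simpa using h
    have hv : v = E10Pair v f • e + E10Pair v e • f +
        ∑ i, bb.repr ⟨_, hm⟩ i • (bb i : Fin 10 → ℤ) := by
      rw [hreprc]; abel
    rw [hv]
    refine Submodule.add_mem _ (Submodule.add_mem _ ?_ ?_) ?_
    · exact Submodule.smul_mem _ _ (Submodule.subset_span ⟨Sum.inl 0, rfl⟩)
    · exact Submodule.smul_mem _ _ (Submodule.subset_span ⟨Sum.inl 1, rfl⟩)
    · exact Submodule.sum_mem _ fun i _ =>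
        Submodule.smul_mem _ _ (Submodule.subset_span ⟨Sum.inr i, rfl⟩)
  exact ⟨Module.Basis.mk hli hsp, fun k => by rw [Module.Basis.mk_apply]⟩

lemma E10Gram_mul_inv : E10Gram * E10GramInv = 1 := by decide

/-- If `e, f ∈ E₁₀` satisfy `⟨e,e⟩ = ⟨f,f⟩ = 0` and `⟨e,f⟩ = 1`, and `M` is the
submodule `{v : ⟨v,e⟩ = 0 ∧ ⟨v,f⟩ = 0}`, then `M` is free of rank `8`, and the
restricted form is even, negative definite, and unimodular (the Gram matrix of any
ℤ-basis of `M` has determinant `±1`). -/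
theorem orthogonal_complement_props (e f : Fin 10 → ℤ)
    (he : E10Pair e e = 0) (hf : E10Pair f f = 0) (hef : E10Pair e f = 1)
    (M : Submodule ℤ (Fin 10 → ℤ))
    (hM : ∀ v : Fin 10 → ℤ, v ∈ M ↔ E10Pair v e = 0 ∧ E10Pair v f = 0) :
    Nonempty (Module.Basis (Fin 8) ℤ M) ∧
    (∀ v ∈ M, (2 : ℤ) ∣ E10Pair v v) ∧
    (∀ v ∈ M, v ≠ 0 → E10Pair v v < 0) ∧
    (∀ b : Module.Basis (Fin 8) ℤ M,
      (Matrix.of fun i j : Fin 8 => E10Pair (b i : Fin 10 → ℤ) (b j : Fin 10 → ℤ)).det = 1 ∨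
      (Matrix.of fun i j : Fin 8 => E10Pair (b i : Fin 10 → ℤ) (b j : Fin 10 → ℤ)).det = -1) := by
  classical
  obtain ⟨n, bn⟩ := Submodule.basisOfPid (Pi.basisFun ℤ (Fin 10)) M
  obtain ⟨cbn, hcbn⟩ := exists_basis_ext e f he hf hef M hM bn
  have hcard : 2 + n = 10 := by
    have h1 : Module.finrank ℤ (Fin 10 → ℤ) = 10 := by
      rw [Module.finrank_eq_card_basis (Pi.basisFun ℤ (Fin 10))]
      simp
    have h2 : Module.finrank ℤ (Fin 10 → ℤ) = 2 + n := by
      rw [Module.finrank_eq_card_basis cbn]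
      simp
    omega
  have hn : n = 8 := by omega
  refine ⟨⟨bn.reindex (finCongr hn)⟩, fun v _ => pair_even v,
    fun v hv hv0 => pair_neg_of_orth e f v he hf hef ((hM v).1 hv).1 ((hM v).1 hv).2 hv0, ?_⟩
  intro b
  obtain ⟨cb, hcb⟩ := exists_basis_ext e f he hf hef M hM b
  set σ : Fin 2 ⊕ Fin 8 ≃ Fin 10 := finSumFinEquiv with hσ
  set cb' : Module.Basis (Fin 10) ℤ (Fin 10 → ℤ) := cb.reindex σ with hcb'
  set std := Pi.basisFun ℤ (Fin 10) with hstd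
  set C : Matrix (Fin 10) (Fin 10) ℤ := std.toMatrix cb' with hC
  have hCentry : ∀ i j, C i j = cb (σ.symm j) i := by
    intro i j
    rw [hC, Module.Basis.toMatrix_apply, hcb', Module.Basis.reindex_apply, hstd, Pi.basisFun_repr]
  have hCdet : C.det = 1 ∨ C.det = -1 :=
    det_pm _ _ (Module.Basis.toMatrix_mul_toMatrix_flip std cb')
  set Gb : Matrix (Fin 8) (Fin 8) ℤ :=
    Matrix.of fun i j : Fin 8 => E10Pair (b i : Fin 10 → ℤ) (b j : Fin 10 → ℤ) with hGb
  have hblock : ∀ k l : Fin 2 ⊕ Fin 8,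
      E10Pair (Sum.elim ![e, f] (fun i => (b i : Fin 10 → ℤ)) k)
        (Sum.elim ![e, f] (fun i => (b i : Fin 10 → ℤ)) l) =
      Matrix.fromBlocks !![0, 1; 1, 0] 0 0 Gb k l := by
    have hbe : ∀ i : Fin 8, E10Pair (b i : Fin 10 → ℤ) e = 0 := fun i => ((hM _).1 (b i).2).1
    have hbf : ∀ i : Fin 8, E10Pair (b i : Fin 10 → ℤ) f = 0 := fun i => ((hM _).1 (b i).2).2
    rintro (a | i) (c | j)
    · fin_cases a <;> fin_cases c <;>
        simp [Matrix.fromBlocks_apply₁₁, he, hf, hef, pair_symm f e]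
    · fin_cases a <;>
        simp [Matrix.fromBlocks_apply₁₂, pair_symm e _, pair_symm f _, hbe, hbf]
    · fin_cases c <;>
        simp [Matrix.fromBlocks_apply₂₁, hbe, hbf]
    · simp [Matrix.fromBlocks_apply₂₂, hGb]
  have hGm : Cᵀ * E10Gram * C =
      (Matrix.fromBlocks !![0, 1; 1, 0] 0 0 Gb).submatrix σ.symm σ.symm := by
    ext i j
    have hentry : (Cᵀ * E10Gram * C) i j = E10Pair (fun l => C l i) (fun k => C k j) := by
      simp only [Matrix.mul_apply, Matrix.transpose_apply, Finset.sum_mul, E10Pair]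
      rw [Finset.sum_comm]
    rw [hentry, Matrix.submatrix_apply, ← hblock]
    have hcol : ∀ i, (fun l => C l i) = Sum.elim ![e, f] (fun i => (b i : Fin 10 → ℤ)) (σ.symm i) := by
      intro i
      funext l
      rw [hCentry, hcb]
    rw [hcol i, hcol j]
  have hGinv : E10Gram * E10GramInv = 1 := E10Gram_mul_inv
  have hdetG : E10Gram.det = 1 ∨ E10Gram.det = -1 := det_pm _ _ hGinv
  have hT : Cᵀ.det = C.det := Matrix.det_transpose C
  have h1 : (Cᵀ * E10Gram * C).det = Cᵀ.det * E10Gram.det * C.det := det_mul_three _ _ _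
  have hA := congrArg Matrix.det hGm
  have h2 : ((Matrix.fromBlocks !![(0:ℤ), 1; 1, 0] 0 0 Gb).submatrix σ.symm σ.symm).det =
      (Matrix.fromBlocks !![(0:ℤ), 1; 1, 0] 0 0 Gb).det :=
    Matrix.det_submatrix_equiv_self σ.symm _
  have h3 : (Matrix.fromBlocks !![(0:ℤ), 1; 1, 0] 0 0 Gb).det =
      (!![(0:ℤ), 1; 1, 0]).det * Gb.det := det_blocks_helper _ _
  have h4 : (!![(0:ℤ), 1; 1, 0]).det = -1 := by
    rw [Matrix.det_fin_two_of]; norm_num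
  have heq : C.det * E10Gram.det * C.det = -1 * Gb.det := by
    have final := (h1.symm.trans hA).trans (h2.trans h3)
    rw [hT, h4] at final
    exact final
  rcases hCdet with hc | hc <;> rcases hdetG with hg | hg <;> rw [hc, hg] at heq <;> omega
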